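/- Let f : X → 𝒢(Z,C) be a convex function and x₀ ∈ dom f. If x₀ solves the strict set-valued Minty inequality (MVI_I): for all x ∈ X, f′(x, x₀−x) ⊇ 0⁺f(x₀) (equivalently, 0 ∈ f′(x, x₀−x) for all x ∈ X), then x₀ solves the strict scalarized Minty inequality (mvi_I): for all x ∈ X and all z* ∈ C⁻∖{0}, φ′_{f,z*}(x, x₀−x) ≤ 0. If additionally the weak regularity condition holds, namely f′(x, x₀−x) = ⋂_{z*∈C⁻∖{0}} {z ∈ Z : φ′_{f,z*}(x, x₀−x) ≤ −z*(z)} for all x ∈ X, then the reverse implication holds as well. -/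

import Mathlib

open Set Pointwise

noncomputable section

variable {Z : Type*} [AddCommGroup Z] [Module ℝ Z] [TopologicalSpace Z]

/-- The inf-residual `A ⊖ B = {z : B + {z} ⊆ A}`. -/
def resid (A B : Set Z) : Set Z := {z : Z | B + {z} ⊆ A}

/-- The recession cone `0⁺A`, with the convention `0⁺∅ = ∅`. -/
def recCone (A : Set Z) : Set Z := {z : Z | A.Nonempty ∧ A + {z} ⊆ A}

/-- `A ⊕ B = cl (A + B)`. -/
def oplus (A B : Set Z) : Set Z := closure (A + B)

/-- Membership in `𝒢(Z,C)`: `A = cl co (A + C)`. -/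
def IsG (C A : Set Z) : Prop := A = closure (convexHull ℝ (A + C))

/-- The set `C⁻ \ {0}` of nonzero elements of the negative dual cone. -/
def negDualNZ (C : Set Z) : Set (Z →L[ℝ] ℝ) :=
  {p : Z →L[ℝ] ℝ | (∀ c ∈ C, p c ≤ 0) ∧ p ≠ 0}

/-- `inf {-z*(z) : z ∈ A}` as an extended real. -/
def scal (p : Z →L[ℝ] ℝ) (A : Set Z) : EReal :=
  sInf ((fun z => ((-(p z) : ℝ) : EReal)) '' A)

/-- Support function `σ(z*|A) = sup {z*(z) : z ∈ A}` as an extended real. -/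
def suppF (p : Z →L[ℝ] ℝ) (A : Set Z) : EReal :=
  sSup ((fun z => ((p z : ℝ) : EReal)) '' A)

/-- Inf-residuation on the extended reals: `r ⊖ s = inf {t ∈ ℝ : r ≤ s + t}`. -/
def eresid (r s : EReal) : EReal :=
  sInf ((fun t : ℝ => (t : EReal)) '' {t : ℝ | r ≤ s + (t : EReal)})

variable {X : Type*} [AddCommGroup X] [Module ℝ X]

/-- The scalarization `φ_{f,z*}(x) = inf {-z*(z) : z ∈ f(x)}`. -/
def phi (f : X → Set Z) (p : Z →L[ℝ] ℝ) (x : X) : EReal := scal p (f x)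

/-- Convexity for set-valued functions:
`f(t x₁ + (1-t) x₂) ⊇ cl (t f(x₁) + (1-t) f(x₂))`. -/
def ConvexSV (f : X → Set Z) : Prop :=
  ∀ x₁ x₂ : X, ∀ t : ℝ, t ∈ Ioo (0:ℝ) 1 →
    closure (t • f x₁ + (1 - t) • f x₂) ⊆ f (t • x₁ + (1 - t) • x₂)

/-- The set-valued directional derivative
`f′(x,u) = ⋂_{t₀>0} cl co ⋃_{0<t<t₀} (1/t)•(f(x+tu) ⊖ f(x))`. -/
def sder (f : X → Set Z) (x u : X) : Set Z :=
  ⋂ t₀ ∈ Ioi (0:ℝ), closure (convexHull ℝ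
    (⋃ t ∈ Ioo (0:ℝ) t₀, (1 / t) • resid (f (x + t • u)) (f x)))

/-- The scalar Dini derivative `φ′_{f,z*}(x,u) = inf_{t>0} (1/t)(φ(x+tu) ⊖ φ(x))`. -/
def phiDer (f : X → Set Z) (p : Z →L[ℝ] ℝ) (x u : X) : EReal :=
  ⨅ t ∈ Ioi (0:ℝ), (((1 / t : ℝ)) : EReal) * eresid (phi f p (x + t • u)) (phi f p x)

end

section Aux

variable {Z : Type*} [AddCommGroup Z] [Module ℝ Z] [TopologicalSpace Z]
variable {X : Type*} [AddCommGroup X] [Module ℝ X]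

lemma eresid_le_of {r s : EReal} {c : ℝ} (h : r ≤ s + (c : EReal)) : eresid r s ≤ c :=
  sInf_le ⟨c, h, rfl⟩

lemma eresid_bot (s : EReal) : eresid ⊥ s = ⊥ := by
  rw [EReal.eq_bot_iff_forall_lt]
  intro y
  have : eresid ⊥ s ≤ ((y - 1 : ℝ) : EReal) :=
    sInf_le ⟨y - 1, show (⊥:EReal) ≤ s + ((y-1:ℝ):EReal) from bot_le, rfl⟩
  exact this.trans_lt (by exact_mod_cast sub_one_lt y)

lemma le_scal_add (p : Z →L[ℝ] ℝ) (A : Set Z) (r : EReal) (c : ℝ)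
    (h : ∀ a ∈ A, r ≤ ((-(p a) + c : ℝ) : EReal)) : r ≤ scal p A + (c : EReal) := by
  rw [← EReal.sub_le_iff_le_add (Or.inl (EReal.coe_ne_bot c)) (Or.inl (EReal.coe_ne_top c))]
  refine le_sInf ?_
  rintro b ⟨a, ha, rfl⟩
  refine EReal.sub_le_of_le_add ?_
  calc r ≤ ((-(p a) + c : ℝ) : EReal) := h a ha
    _ = ((-(p a) : ℝ) : EReal) + (c : ℝ) := by push_cast; ring_nf

/-- The key scalarization estimate: the Dini derivative of the scalarized map
is bounded above by `-p z` on any element `z` of the difference-quotient sets. -/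
lemma phiDer_le_of_mem_quot (f : X → Set Z) (p : Z →L[ℝ] ℝ) (x u : X)
    {t : ℝ} (ht : t ∈ Ioi (0:ℝ)) {w : Z} (hw : w ∈ resid (f (x + t • u)) (f x)) :
    phiDer f p x u ≤ ((-(p ((1/t) • w)) : ℝ) : EReal) := by
  set c : ℝ := -(p w) with hc
  have h1 : phi f p (x + t • u) ≤ phi f p x + (c : EReal) := by
    refine le_scal_add p (f x) _ c ?_
    intro a ha
    have haw : a + w ∈ f (x + t • u) := hw (Set.add_mem_add ha rfl)
    refine sInf_le ⟨a + w, haw, ?_⟩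
    show ((-(p (a+w)) : ℝ) : EReal) = ((-(p a) + c : ℝ) : EReal)
    rw [EReal.coe_eq_coe_iff, map_add]
    ring
  have h2 : eresid (phi f p (x + t • u)) (phi f p x) ≤ (c : EReal) := eresid_le_of h1
  have ht0 : (0:ℝ) < t := ht
  have h3 : (((1 / t : ℝ)) : EReal) * eresid (phi f p (x + t • u)) (phi f p x)
      ≤ (((1 / t : ℝ)) : EReal) * (c : EReal) :=
    mul_le_mul_of_nonneg_left h2 (by exact_mod_cast le_of_lt (by positivity : (0:ℝ) < 1/t))
  have h4 : phiDer f p x u ≤ (((1 / t : ℝ)) : EReal) * eresid (phi f p (x + t • u)) (phi f p x) :=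
    iInf₂_le t ht
  refine h4.trans (h3.trans ?_)
  rw [← EReal.coe_mul, EReal.coe_le_coe_iff]
  rw [map_smul]
  simp [hc, smul_eq_mul]

end Aux

theorem stmt_12
  {Z : Type*} [AddCommGroup Z] [Module ℝ Z] [TopologicalSpace Z]
  [IsTopologicalAddGroup Z] [ContinuousSMul ℝ Z] [LocallyConvexSpace ℝ Z] [T2Space Z]
  {X : Type*} [AddCommGroup X] [Module ℝ X]
  (C : Set Z) (hCclosed : IsClosed C) (hCconv : Convex ℝ C)
  (hCcone : ∀ c ∈ C, ∀ r : ℝ, 0 < r → r • c ∈ C) (hC0 : (0:Z) ∈ C)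
  (hdual : (negDualNZ C).Nonempty)
  (f : X → Set Z) (hG : ∀ x, IsG C (f x)) (hf : ConvexSV f)
  (x₀ : X) (hx₀ : (f x₀).Nonempty) :
    ((∀ x : X, recCone (f x₀) ⊆ sder f x (x₀ - x)) → (∀ x : X, ∀ p ∈ negDualNZ C, phiDer f p x (x₀ - x) ≤ 0))
    ∧ ((∀ x : X, sder f x (x₀ - x)
          = ⋂ p ∈ negDualNZ C, {z : Z | phiDer f p x (x₀ - x) ≤ ((-(p z) : ℝ) : EReal)}) →
        ((∀ x : X, ∀ p ∈ negDualNZ C, phiDer f p x (x₀ - x) ≤ 0) → (∀ x : X, recCone (f x₀) ⊆ sder f x (x₀ - x)))) := by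
  constructor
  · -- MVI_I ⇒ mvi_I
    intro hMVI x p hp
    have h0rec : (0:Z) ∈ recCone (f x₀) := ⟨hx₀, by simp⟩
    have h0mem : (0:Z) ∈ sder f x (x₀ - x) := hMVI x h0rec
    by_contra hlt
    push_neg at hlt
    -- pick a real 0 < m < phiDer
    obtain ⟨m, hm0, hmD⟩ := EReal.exists_between_coe_real hlt
    have hm0' : (0:ℝ) < m := by exact_mod_cast hm0
    -- the halfspace K
    set K : Set Z := {z : Z | p z ≤ -m} with hK
    have hKclosed : IsClosed K := isClosed_le p.continuous continuous_const
    have hKconv : Convex ℝ K :=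
      convex_halfSpace_le ⟨fun a b => map_add p a b, fun r a => map_smul p r a⟩ (-m)
    -- the quotient set at t₀ = 1 is inside K
    have hUK : (⋃ t ∈ Ioo (0:ℝ) 1, (1 / t) • resid (f (x + t • (x₀ - x))) (f x)) ⊆ K := by
      rintro z hz
      simp only [mem_iUnion, exists_prop] at hz
      obtain ⟨t, htI, w, hw, rfl⟩ := hz
      have key := phiDer_le_of_mem_quot f p x (x₀ - x) (show t ∈ Ioi (0:ℝ) from htI.1) hw
      have : (m : EReal) ≤ ((-(p ((1/t) • w)) : ℝ) : EReal) := (le_of_lt hmD).trans key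
      have : m ≤ -(p ((1/t) • w)) := by exact_mod_cast this
      show p ((1/t) • w) ≤ -m
      linarith
    have hsub : closure (convexHull ℝ
        (⋃ t ∈ Ioo (0:ℝ) 1, (1 / t) • resid (f (x + t • (x₀ - x))) (f x))) ⊆ K :=
      closure_minimal (convexHull_min hUK hKconv) hKclosed
    have h0K : (0:Z) ∈ K := by
      have := mem_iInter₂.mp h0mem 1 (by norm_num : (1:ℝ) ∈ Ioi (0:ℝ))
      exact hsub this
    have : p 0 ≤ -m := h0K
    rw [map_zero] at this
    linarith
  · -- regularity + mvi_I ⇒ MVI_I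
    intro hreg hscal x z hz
    rw [hreg x]
    refine mem_iInter₂.mpr fun p hp => ?_
    show phiDer f p x (x₀ - x) ≤ ((-(p z) : ℝ) : EReal)
    by_cases hb : phi f p x₀ = ⊥
    · -- degenerate case: the derivative is -∞
      have h1 : phiDer f p x (x₀ - x)
          ≤ (((1 / (1:ℝ))) : EReal) * eresid (phi f p (x + (1:ℝ) • (x₀ - x))) (phi f p x) :=
        iInf₂_le 1 (by norm_num : (1:ℝ) ∈ Ioi (0:ℝ))
      have hxx : x + (1:ℝ) • (x₀ - x) = x₀ := by
        rw [one_smul]; abel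
      rw [hxx, hb, eresid_bot] at h1
      have : (((1 / (1:ℝ))) : EReal) * (⊥:EReal) = ⊥ := by norm_num
      rw [this] at h1
      exact h1.trans bot_le
    · -- nondegenerate: -p z ≥ 0
      have hadd : phi f p x₀ ≤ phi f p x₀ + ((-(p z) : ℝ) : EReal) := by
        refine le_scal_add p (f x₀) _ (-(p z)) ?_
        intro a ha
        have haz : a + z ∈ f x₀ := hz.2 (Set.add_mem_add ha rfl)
        refine sInf_le ⟨a + z, haz, ?_⟩
        show ((-(p (a+z)) : ℝ) : EReal) = ((-(p a) + -(p z) : ℝ) : EReal)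
        rw [EReal.coe_eq_coe_iff, map_add]
        ring
      have hntop : phi f p x₀ ≠ ⊤ := by
        obtain ⟨a, ha⟩ := hx₀
        have : phi f p x₀ ≤ ((-(p a) : ℝ) : EReal) := sInf_le ⟨a, ha, rfl⟩
        exact ne_top_of_le_ne_top (EReal.coe_ne_top _) this
      lift phi f p x₀ to ℝ using ⟨hntop, hb⟩ with r hr
      rw [← EReal.coe_add, EReal.coe_le_coe_iff] at hadd
      have hz0 : (0:ℝ) ≤ -(p z) := by linarith
      calc phiDer f p x (x₀ - x) ≤ 0 := hscal x p hp
        _ ≤ ((-(p z) : ℝ) : EReal) := by exact_mod_cast hz0
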